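/- Let X be a connected simple graph, equipped with the shortest-path metric d on its vertex set. Suppose that for every ordered pair of distinct vertices a, b of X there is given a connected subgraph A(a,b) of X containing both a and b, and suppose there exists a constant D > 0 such that: (i) whenever a and b are joined by an edge of X, the subgraph A(a,b) has diameter at most D in the metric d; and (ii) for every triple a, b, c of vertices of X, every vertex of A(a,c) lies within distance D of the union of the vertex sets of A(a,b) and A(b,c). Then X is Gromov hyperbolic, with a hyperbolicity constant δ depending only on D; that is, there exists δ = δ(D) > 0 such that for every triple of vertices x, y, z of X and every choice of shortest-path walks p from x to y, q from y to z, and r from x to z, every vertex on p lies within distance δ of the union of the vertices on q and the vertices on r. -/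

import Mathlib

namespace HypAux
open SimpleGraph

variable {V : Type} {X : SimpleGraph V}

/-- Split a walk at index `j`. -/
lemma walk_split {a b : V} (p : X.Walk a b) (j : ℕ) :
    ∃ (q : X.Walk a (p.getVert j)) (r : X.Walk (p.getVert j) b),
      q.length = min j p.length ∧ q.append r = p := by
  induction p generalizing j with
  | nil => exact ⟨.nil, .nil, by simp, rfl⟩
  | @cons a c b h p ih =>
    cases j with
    | zero => exact ⟨.nil, .cons h p, by simp; rfl, rfl⟩
    | succ j =>
      obtain ⟨q, r, hq, he⟩ := ih j
      refine ⟨.cons h q, r, ?_, ?_⟩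
      · simp [hq, Nat.succ_min_succ]
      · exact congrArg (Walk.cons h) he

lemma dist_getVert {a b : V} (hc : X.Connected) (p : X.Walk a b)
    (hp : p.length = X.dist a b) {j : ℕ} (hj : j ≤ p.length) :
    X.dist a (p.getVert j) = j ∧ X.dist (p.getVert j) b = p.length - j := by
  obtain ⟨q, r, hq, he⟩ := walk_split p j
  have hql : q.length = j := by omega
  have hrl : q.length + r.length = p.length := by
    rw [← Walk.length_append, he]
  have h1 : X.dist a (p.getVert j) ≤ j := le_trans (dist_le q) (le_of_eq hql)
  have h2 : X.dist (p.getVert j) b ≤ p.length - j := by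
    have h2' := dist_le r
    have : r.length = p.length - j := by omega
    omega
  have h3 : X.dist a b ≤ X.dist a (p.getVert j) + X.dist (p.getVert j) b :=
    hc.dist_triangle
  omega

/-- A sub-walk of a geodesic between indices `i ≤ j`, itself geodesic. -/
lemma exists_subgeo {a b : V} (hc : X.Connected) (p : X.Walk a b)
    (hp : p.length = X.dist a b) {i j : ℕ} (hij : i ≤ j) (hj : j ≤ p.length) :
    ∃ w : X.Walk (p.getVert i) (p.getVert j),
      w.length = j - i ∧ w.length = X.dist (p.getVert i) (p.getVert j) ∧
      ∀ y, y ∈ w.support → y ∈ p.support := by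
  obtain ⟨q, r, hq, he⟩ := walk_split p i
  have hql : q.length = i := by omega
  have hrl : q.length + r.length = p.length := by rw [← Walk.length_append, he]
  have hri : X.dist (p.getVert i) b = p.length - i := (dist_getVert hc p hp (le_trans hij hj)).2
  have hrgeo : r.length = X.dist (p.getVert i) b := by omega
  have hEnd : r.getVert (j - i) = p.getVert j := by
    conv_rhs => rw [← he]
    rw [Walk.getVert_append]
    have hnlt : ¬ j < i := by omega
    rw [hql, if_neg hnlt]
  have hjr : j - i ≤ r.length := by omega
  obtain ⟨q₂, r₂, hq₂, he₂⟩ := walk_split r (j - i)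
  have hq₂l : q₂.length = j - i := by omega
  have hdist : X.dist (p.getVert i) (r.getVert (j - i)) = j - i :=
    (dist_getVert hc r hrgeo hjr).1
  refine ⟨q₂.copy rfl hEnd, ?_, ?_, ?_⟩
  · simpa using hq₂l
  · rw [Walk.length_copy, hq₂l, ← hEnd, hdist]
  · intro y hy
    rw [Walk.support_copy] at hy
    have hy1 : y ∈ r.support := by
      rw [← he₂]; exact Walk.subset_support_append_left _ _ hy
    rw [← he]
    exact Walk.subset_support_append_right _ _ hy1


lemma dist_getVert_pair {a b : V} (hc : X.Connected) (p : X.Walk a b)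
    (hp : p.length = X.dist a b) {i j : ℕ} (hij : i ≤ j) (hj : j ≤ p.length) :
    X.dist (p.getVert i) (p.getVert j) = j - i := by
  obtain ⟨w, h1, h2, _⟩ := exists_subgeo hc p hp hij hj
  omega

lemma exists_prefix_geo {a b : V} (hc : X.Connected) (p : X.Walk a b)
    (hp : p.length = X.dist a b) {j : ℕ} (hj : j ≤ p.length) :
    ∃ w : X.Walk a (p.getVert j), w.length = j ∧ w.length = X.dist a (p.getVert j) ∧
      ∀ y, y ∈ w.support → y ∈ p.support := by
  obtain ⟨w, h1, h2, h3⟩ := exists_subgeo hc p hp (Nat.zero_le j) hj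
  refine ⟨w.copy p.getVert_zero rfl, ?_, ?_, ?_⟩
  · simpa using h1
  · rw [Walk.length_copy]
    exact h2.trans (by rw [p.getVert_zero])
  · intro y hy; rw [Walk.support_copy] at hy; exact h3 y hy

lemma exists_suffix_geo {a b : V} (hc : X.Connected) (p : X.Walk a b)
    (hp : p.length = X.dist a b) {i : ℕ} (hi : i ≤ p.length) :
    ∃ w : X.Walk (p.getVert i) b, w.length = p.length - i ∧
      w.length = X.dist (p.getVert i) b ∧
      ∀ y, y ∈ w.support → y ∈ p.support := by
  obtain ⟨w, h1, h2, h3⟩ := exists_subgeo hc p hp hi (le_refl p.length)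
  refine ⟨w.copy rfl p.getVert_length, ?_, ?_, ?_⟩
  · simpa using h1
  · rw [Walk.length_copy]
    exact h2.trans (by rw [p.getVert_length])
  · intro y hy; rw [Walk.support_copy] at hy; exact h3 y hy

lemma nat_ivt {g : ℕ → ℕ} : ∀ (N t : ℕ), g 0 ≤ t → t ≤ g N →
    (∀ i, i < N → g (i + 1) ≤ g i + 1) → ∃ i, i ≤ N ∧ g i = t := by
  intro N
  induction N with
  | zero => intro t h0 hN _; exact ⟨0, le_refl 0, le_antisymm hN h0 ▸ rfl⟩
  | succ N ih =>
    intro t h0 hN hstep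
    by_cases hle : t ≤ g N
    · obtain ⟨i, hi, he⟩ := ih t h0 hle (fun i hi => hstep i (by omega))
      exact ⟨i, by omega, he⟩
    · have := hstep N (by omega)
      exact ⟨N + 1, le_refl _, by omega⟩

lemma dist_le_one_of_adj {a b : V} (h : X.Adj a b) : X.dist a b ≤ 1 := by
  have := dist_le h.toWalk
  simpa using this

lemma subgraph_walk {S : X.Subgraph} (hS : S.Connected) {a b : V}
    (ha : a ∈ S.verts) (hb : b ∈ S.verts) :
    ∃ γ : X.Walk a b, ∀ y, y ∈ γ.support → y ∈ S.verts := by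
  obtain ⟨w⟩ := hS ⟨a, ha⟩ ⟨b, hb⟩
  refine ⟨w.map S.hom, ?_⟩
  intro y hy
  change y ∈ (w.map S.hom).support at hy
  rw [Walk.support_map] at hy
  obtain ⟨⟨y', hy'⟩, _, rfl⟩ := List.mem_map.mp hy
  exact hy'

lemma pow_ineq (D : ℕ) : 4 * (D * (6 * D + 13)) + 6 * D + 2 ≤ 2 ^ (6 * D + 10) := by
  have h1 : D + 1 ≤ 2 ^ D := Nat.lt_two_pow_self (n := D)
  have h2 : (D + 1) ^ 2 ≤ (2 ^ D) ^ 2 := Nat.pow_le_pow_left h1 2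
  have h3 : 2 ^ (6 * D + 10) = ((2 ^ D) ^ 2) * 2 ^ (4 * D + 10) := by
    rw [← pow_mul, ← pow_add]; ring_nf
  have h4 : 1024 ≤ 2 ^ (4 * D + 10) := by
    calc (1024 : ℕ) = 2 ^ 10 := by norm_num
    _ ≤ 2 ^ (4 * D + 10) := Nat.pow_le_pow_right (by norm_num) (by omega)
  calc 4 * (D * (6 * D + 13)) + 6 * D + 2 ≤ 1024 * (D + 1) ^ 2 := by nlinarith
  _ ≤ 1024 * (2 ^ D) ^ 2 := by nlinarith
  _ ≤ 2 ^ (4 * D + 10) * (2 ^ D) ^ 2 := by nlinarith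
  _ = 2 ^ (6 * D + 10) := by rw [h3]; ring


section Criterion

variable {D : ℕ} {A : V → V → X.Subgraph}

/-- Logarithmic estimate: every vertex of `A a b` is within `D*(k+1)` of any
geodesic from `a` to `b` of length at most `2^k`. -/
lemma log_est (hc : X.Connected)
    (hA : ∀ a b : V, a ≠ b → (A a b).Connected ∧ a ∈ (A a b).verts ∧ b ∈ (A a b).verts)
    (hloc : ∀ a b : V, X.Adj a b → ∀ x ∈ (A a b).verts, ∀ y ∈ (A a b).verts, X.dist x y ≤ D)
    (hslim : ∀ a b c : V, ∀ v ∈ (A a c).verts,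
      ∃ w : V, (w ∈ (A a b).verts ∨ w ∈ (A b c).verts) ∧ X.dist v w ≤ D) :
    ∀ k : ℕ, ∀ a b : V, a ≠ b → ∀ p : X.Walk a b,
    p.length = X.dist a b → p.length ≤ 2 ^ k → ∀ v ∈ (A a b).verts,
    ∃ w ∈ p.support, X.dist v w ≤ D * (k + 1) := by
  intro k
  induction k with
  | zero =>
    intro a b hab p hp hlen v hv
    have hpos : 0 < X.dist a b := hc.pos_dist_of_ne hab
    have hone : X.dist a b = 1 := by simp at hlen; omega
    have hadj : X.Adj a b := SimpleGraph.dist_eq_one_iff_adj.mp hone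
    exact ⟨a, p.start_mem_support,
      by simpa using hloc a b hadj v hv a (hA a b hab).2.1⟩
  | succ k ih =>
    intro a b hab p hp hlen v hv
    have hmul : D + D * (k + 1) = D * (k + 1 + 1) := by ring
    by_cases hsmall : p.length ≤ 2 ^ k
    · obtain ⟨w, hw, hd⟩ := ih a b hab p hp hsmall v hv
      refine ⟨w, hw, le_trans hd ?_⟩
      exact Nat.mul_le_mul_left D (by omega)
    · have h1 : 2 ^ k < p.length := by omega
      have hj : 2 ^ k ≤ p.length := le_of_lt h1
      have hpow : 2 ^ (k + 1) = 2 ^ k + 2 ^ k := by rw [pow_succ]; ring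
      have hdam : X.dist a (p.getVert (2 ^ k)) = 2 ^ k := (dist_getVert hc p hp hj).1
      have hdmb : X.dist (p.getVert (2 ^ k)) b = p.length - 2 ^ k :=
        (dist_getVert hc p hp hj).2
      have hdself1 : X.dist a a = 0 := by simp
      have ham : a ≠ p.getVert (2 ^ k) := by
        intro h; rw [← h] at hdam
        have : (0:ℕ) < 2 ^ k := Nat.pow_pos (by norm_num)
        omega
      have hmb : p.getVert (2 ^ k) ≠ b := by
        intro h; rw [h] at hdmb
        have : X.dist b b = 0 := by simp
        omega
      obtain ⟨q1, hq1l, hq1g, hq1s⟩ := exists_prefix_geo hc p hp hj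
      obtain ⟨q2, hq2l, hq2g, hq2s⟩ := exists_suffix_geo hc p hp hj
      obtain ⟨w₀, hw₀, hvw₀⟩ := hslim a (p.getVert (2 ^ k)) b v hv
      cases hw₀ with
      | inl h =>
        obtain ⟨y, hy, hd⟩ := ih a (p.getVert (2 ^ k)) ham q1
          (by omega) (by omega) w₀ h
        refine ⟨y, hq1s y hy, ?_⟩
        have htri : X.dist v y ≤ X.dist v w₀ + X.dist w₀ y := hc.dist_triangle
        omega
      | inr h =>
        obtain ⟨y, hy, hd⟩ := ih (p.getVert (2 ^ k)) b hmb q2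
          (by omega) (by omega) w₀ h
        refine ⟨y, hq2s y hy, ?_⟩
        have htri : X.dist v y ≤ X.dist v w₀ + X.dist w₀ y := hc.dist_triangle
        omega

end Criterion


section Main

variable {D : ℕ} {A : V → V → X.Subgraph}

/-- Constant estimate: every vertex of `A a b` is within `K = D*(6D+13)` of any
geodesic from `a` to `b`. -/
lemma main_est (hD : 0 < D) (hc : X.Connected)
    (hA : ∀ a b : V, a ≠ b → (A a b).Connected ∧ a ∈ (A a b).verts ∧ b ∈ (A a b).verts)
    (hloc : ∀ a b : V, X.Adj a b → ∀ x ∈ (A a b).verts, ∀ y ∈ (A a b).verts, X.dist x y ≤ D)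
    (hslim : ∀ a b c : V, ∀ v ∈ (A a c).verts,
      ∃ w : V, (w ∈ (A a b).verts ∨ w ∈ (A b c).verts) ∧ X.dist v w ≤ D) :
    ∀ n : ℕ, ∀ a b : V, a ≠ b → ∀ p : X.Walk a b,
    p.length = X.dist a b → p.length ≤ n → ∀ v ∈ (A a b).verts,
    ∃ w ∈ p.support, X.dist v w ≤ D * (6 * D + 13) := by
  classical
  intro n
  induction n using Nat.strong_induction_on with
  | _ n ih =>
  intro a b hab p hp hpn v hv
  set kk := 6 * D + 10 with hkk
  set K := D * (6 * D + 13) with hK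
  have h9 : D + (D + D * (kk + 1)) = K := by rw [hkk, hK]; ring
  have hd1 : 1 ≤ p.length := by
    have := hc.pos_dist_of_ne hab; omega
  by_cases hbase : p.length = 1
  · have hone : X.dist a b = 1 := by omega
    have hadj : X.Adj a b := SimpleGraph.dist_eq_one_iff_adj.mp hone
    refine ⟨a, p.start_mem_support, ?_⟩
    have hD' := hloc a b hadj v hv a (hA a b hab).2.1
    omega
  · have hd2 : 2 ≤ p.length := by omega
    -- the closest point z on p to v
    have hzex : ∃ z ∈ p.support, ∀ y ∈ p.support, X.dist v z ≤ X.dist v y := by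
      obtain ⟨z, hz, hmin⟩ := Finset.exists_min_image p.support.toFinset (X.dist v)
        ⟨a, List.mem_toFinset.mpr p.start_mem_support⟩
      exact ⟨z, List.mem_toFinset.mp hz, fun y hy => hmin y (List.mem_toFinset.mpr hy)⟩
    obtain ⟨z, hzsup, hzmin⟩ := hzex
    obtain ⟨t, hgvt, htle⟩ := Walk.mem_support_iff_exists_getVert.mp hzsup
    have hdaz : X.dist a z = t := by
      rw [← hgvt]; exact (dist_getVert hc p hp htle).1
    have hdzb : X.dist z b = p.length - t := by
      rw [← hgvt]; exact (dist_getVert hc p hp htle).2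
    set s := X.dist v z with hs
    -- Step A: a priori bound on s
    have hstepA : s ≤ D + K := by
      have h1le : 1 ≤ p.length := hd1
      have hdam : X.dist a (p.getVert 1) = 1 := (dist_getVert hc p hp h1le).1
      have hdmb : X.dist (p.getVert 1) b = p.length - 1 := (dist_getVert hc p hp h1le).2
      have ham : a ≠ p.getVert 1 := by
        intro h; rw [← h] at hdam
        have : X.dist a a = 0 := by simp
        omega
      have hmb : p.getVert 1 ≠ b := by
        intro h; rw [h] at hdmb
        have : X.dist b b = 0 := by simp
        omega
      obtain ⟨q1, hq1l, hq1g, hq1s⟩ := exists_prefix_geo hc p hp h1le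
      obtain ⟨q2, hq2l, hq2g, hq2s⟩ := exists_suffix_geo hc p hp h1le
      obtain ⟨w₀, hw₀, hvw₀⟩ := hslim a (p.getVert 1) b v hv
      cases hw₀ with
      | inl h =>
        obtain ⟨y, hy, hd⟩ := ih (n - 1) (by omega) a (p.getVert 1) ham q1 hq1g (by omega) w₀ h
        have htri : X.dist v y ≤ X.dist v w₀ + X.dist w₀ y := hc.dist_triangle
        have hzy := hzmin y (hq1s y hy)
        omega
      | inr h =>
        obtain ⟨y, hy, hd⟩ := ih (n - 1) (by omega) (p.getVert 1) b hmb q2 hq2g (by omega) w₀ h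
        have htri : X.dist v y ≤ X.dist v w₀ + X.dist w₀ y := hc.dist_triangle
        have hzy := hzmin y (hq2s y hy)
        omega
    set f := s + K + 2 * D + 1 with hf
    have hpI := pow_ineq D
    rw [← hK, ← hkk] at hpI
    by_cases hL : f + 1 ≤ t
    · by_cases hR : t + f + 1 ≤ p.length
      · -- Case 1 : both flanks available
        have hi2 : t - f ≤ p.length := by omega
        have hi3 : t + f ≤ p.length := by omega
        have hda2 : X.dist a (p.getVert (t - f)) = t - f := (dist_getVert hc p hp hi2).1
        have hd3b : X.dist (p.getVert (t + f)) b = p.length - (t + f) :=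
          (dist_getVert hc p hp hi3).2
        have haz2 : a ≠ p.getVert (t - f) := by
          intro h; rw [← h] at hda2
          have : X.dist a a = 0 := by simp
          omega
        have hz3b : p.getVert (t + f) ≠ b := by
          intro h; rw [h] at hd3b
          have : X.dist b b = 0 := by simp
          omega
        obtain ⟨w₁, hw₁, hvw₁⟩ := hslim a (p.getVert (t - f)) b v hv
        cases hw₁ with
        | inl h1 =>
          -- left contradiction
          exfalso
          obtain ⟨q1, hq1l, hq1g, hq1s⟩ := exists_prefix_geo hc p hp hi2
          obtain ⟨y, hy, hdy⟩ := ih (n - 1) (by omega) a _ haz2 q1 hq1g (by omega) w₁ h1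
          obtain ⟨t', hgvt', ht'⟩ := Walk.mem_support_iff_exists_getVert.mp hy
          have hday : X.dist a y ≤ t - f := by
            rw [← hgvt']
            have := (dist_getVert hc q1 hq1g ht').1
            omega
          have h3 : X.dist a z ≤ X.dist a y + X.dist y z := hc.dist_triangle
          have h4 : X.dist y z = X.dist z y := SimpleGraph.dist_comm
          have h5 : X.dist z y ≤ X.dist z v + X.dist v y := hc.dist_triangle
          have h6 : X.dist v y ≤ X.dist v w₁ + X.dist w₁ y := hc.dist_triangle
          have h7 : X.dist z v = X.dist v z := SimpleGraph.dist_comm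
          omega
        | inr h1 =>
          obtain ⟨w₂, hw₂, h12⟩ := hslim (p.getVert (t - f)) (p.getVert (t + f)) b w₁ h1
          cases hw₂ with
          | inl h2 =>
            -- middle : log estimate
            have hij : t - f ≤ t + f := by omega
            obtain ⟨q3, hq3l, hq3g, hq3s⟩ := exists_subgeo hc p hp hij hi3
            have hdist23 : X.dist (p.getVert (t - f)) (p.getVert (t + f)) = (t + f) - (t - f) :=
              dist_getVert_pair hc p hp hij hi3
            have hne23 : p.getVert (t - f) ≠ p.getVert (t + f) := by
              intro h; rw [h] at hdist23
              have : X.dist (p.getVert (t + f)) (p.getVert (t + f)) = 0 := by simp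
              omega
            have h2f : q3.length ≤ 2 ^ kk := by omega
            obtain ⟨y, hy, hdy⟩ := log_est hc hA hloc hslim kk _ _ hne23 q3 hq3g h2f w₂ h2
            refine ⟨z, hzsup, ?_⟩
            have h6 : X.dist v y ≤ X.dist v w₁ + X.dist w₁ y := hc.dist_triangle
            have h7 : X.dist w₁ y ≤ X.dist w₁ w₂ + X.dist w₂ y := hc.dist_triangle
            have h8 := hzmin y (hq3s y hy)
            omega
          | inr h2 =>
            -- right contradiction
            exfalso
            obtain ⟨q2, hq2l, hq2g, hq2s⟩ := exists_suffix_geo hc p hp hi3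
            obtain ⟨y, hy, hdy⟩ := ih (n - 1) (by omega) _ b hz3b q2 hq2g (by omega) w₂ h2
            obtain ⟨t', hgvt', ht'⟩ := Walk.mem_support_iff_exists_getVert.mp hy
            have hdyb : X.dist y b ≤ p.length - (t + f) := by
              rw [← hgvt']
              have := (dist_getVert hc q2 hq2g ht').2
              omega
            have h3 : X.dist z b ≤ X.dist z y + X.dist y b := hc.dist_triangle
            have h5 : X.dist z y ≤ X.dist z v + X.dist v y := hc.dist_triangle
            have h6 : X.dist v y ≤ X.dist v w₁ + X.dist w₁ y := hc.dist_triangle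
            have h7 : X.dist w₁ y ≤ X.dist w₁ w₂ + X.dist w₂ y := hc.dist_triangle
            have h8 : X.dist z v = X.dist v z := SimpleGraph.dist_comm
            omega
      · -- Case 3 : right end close, left flank available
        have hi2 : t - f ≤ p.length := by omega
        have hda2 : X.dist a (p.getVert (t - f)) = t - f := (dist_getVert hc p hp hi2).1
        have hd2b : X.dist (p.getVert (t - f)) b = p.length - (t - f) :=
          (dist_getVert hc p hp hi2).2
        have haz2 : a ≠ p.getVert (t - f) := by
          intro h; rw [← h] at hda2
          have : X.dist a a = 0 := by simp
          omega
        have hz2b : p.getVert (t - f) ≠ b := by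
          intro h; rw [h] at hd2b
          have : X.dist b b = 0 := by simp
          omega
        obtain ⟨w₁, hw₁, hvw₁⟩ := hslim a (p.getVert (t - f)) b v hv
        cases hw₁ with
        | inl h1 =>
          -- left contradiction
          exfalso
          obtain ⟨q1, hq1l, hq1g, hq1s⟩ := exists_prefix_geo hc p hp hi2
          obtain ⟨y, hy, hdy⟩ := ih (n - 1) (by omega) a _ haz2 q1 hq1g (by omega) w₁ h1
          obtain ⟨t', hgvt', ht'⟩ := Walk.mem_support_iff_exists_getVert.mp hy
          have hday : X.dist a y ≤ t - f := by
            rw [← hgvt']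
            have := (dist_getVert hc q1 hq1g ht').1
            omega
          have h3 : X.dist a z ≤ X.dist a y + X.dist y z := hc.dist_triangle
          have h4 : X.dist y z = X.dist z y := SimpleGraph.dist_comm
          have h5 : X.dist z y ≤ X.dist z v + X.dist v y := hc.dist_triangle
          have h6 : X.dist v y ≤ X.dist v w₁ + X.dist w₁ y := hc.dist_triangle
          have h7 : X.dist z v = X.dist v z := SimpleGraph.dist_comm
          omega
        | inr h1 =>
          -- suffix log estimate
          obtain ⟨q2, hq2l, hq2g, hq2s⟩ := exists_suffix_geo hc p hp hi2
          have h2f : q2.length ≤ 2 ^ kk := by omega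
          obtain ⟨y, hy, hdy⟩ := log_est hc hA hloc hslim kk _ _ hz2b q2 hq2g h2f w₁ h1
          refine ⟨z, hzsup, ?_⟩
          have h6 : X.dist v y ≤ X.dist v w₁ + X.dist w₁ y := hc.dist_triangle
          have h8 := hzmin y (hq2s y hy)
          omega
    · by_cases hR : t + f + 1 ≤ p.length
      · -- Case 2 : left end close, right flank available
        have hi3 : t + f ≤ p.length := by omega
        have hda3 : X.dist a (p.getVert (t + f)) = t + f := (dist_getVert hc p hp hi3).1
        have hd3b : X.dist (p.getVert (t + f)) b = p.length - (t + f) :=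
          (dist_getVert hc p hp hi3).2
        have haz3 : a ≠ p.getVert (t + f) := by
          intro h; rw [← h] at hda3
          have : X.dist a a = 0 := by simp
          omega
        have hz3b : p.getVert (t + f) ≠ b := by
          intro h; rw [h] at hd3b
          have : X.dist b b = 0 := by simp
          omega
        obtain ⟨w₁, hw₁, hvw₁⟩ := hslim a (p.getVert (t + f)) b v hv
        cases hw₁ with
        | inr h1 =>
          -- right contradiction
          exfalso
          obtain ⟨q2, hq2l, hq2g, hq2s⟩ := exists_suffix_geo hc p hp hi3
          obtain ⟨y, hy, hdy⟩ := ih (n - 1) (by omega) _ b hz3b q2 hq2g (by omega) w₁ h1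
          obtain ⟨t', hgvt', ht'⟩ := Walk.mem_support_iff_exists_getVert.mp hy
          have hdyb : X.dist y b ≤ p.length - (t + f) := by
            rw [← hgvt']
            have := (dist_getVert hc q2 hq2g ht').2
            omega
          have h3 : X.dist z b ≤ X.dist z y + X.dist y b := hc.dist_triangle
          have h5 : X.dist z y ≤ X.dist z v + X.dist v y := hc.dist_triangle
          have h6 : X.dist v y ≤ X.dist v w₁ + X.dist w₁ y := hc.dist_triangle
          have h8 : X.dist z v = X.dist v z := SimpleGraph.dist_comm
          omega
        | inl h1 =>
          -- prefix log estimate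
          obtain ⟨q1, hq1l, hq1g, hq1s⟩ := exists_prefix_geo hc p hp hi3
          have h2f : q1.length ≤ 2 ^ kk := by omega
          obtain ⟨y, hy, hdy⟩ := log_est hc hA hloc hslim kk _ _ haz3 q1 hq1g h2f w₁ h1
          refine ⟨z, hzsup, ?_⟩
          have h6 : X.dist v y ≤ X.dist v w₁ + X.dist w₁ y := hc.dist_triangle
          have h8 := hzmin y (hq1s y hy)
          omega
      · -- Case 4 : both ends close, log estimate on p itself
        have h2f : p.length ≤ 2 ^ kk := by omega
        obtain ⟨y, hy, hdy⟩ := log_est hc hA hloc hslim kk _ _ hab p hp h2f v hv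
        exact ⟨y, hy, by omega⟩

end Main


section Cross

variable {D : ℕ} {A : V → V → X.Subgraph}

/-- Every vertex of a geodesic is within `2K` of the set `A a b`. -/
lemma geo_near (hD : 0 < D) (hc : X.Connected)
    (hA : ∀ a b : V, a ≠ b → (A a b).Connected ∧ a ∈ (A a b).verts ∧ b ∈ (A a b).verts)
    (hloc : ∀ a b : V, X.Adj a b → ∀ x ∈ (A a b).verts, ∀ y ∈ (A a b).verts, X.dist x y ≤ D)
    (hslim : ∀ a b c : V, ∀ v ∈ (A a c).verts,
      ∃ w : V, (w ∈ (A a b).verts ∨ w ∈ (A b c).verts) ∧ X.dist v w ≤ D)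
    {a b : V} (hab : a ≠ b) (p : X.Walk a b) (hp : p.length = X.dist a b)
    (x : V) (hx : x ∈ p.support) :
    ∃ u ∈ (A a b).verts, X.dist x u ≤ 2 * (D * (6 * D + 13)) := by
  obtain ⟨t, hgvt, htle⟩ := Walk.mem_support_iff_exists_getVert.mp hx
  have hdax : X.dist a x = t := by rw [← hgvt]; exact (dist_getVert hc p hp htle).1
  obtain ⟨hAc, ha, hb⟩ := hA a b hab
  obtain ⟨γ, hγ⟩ := subgraph_walk hAc ha hb
  have h0 : X.dist a (γ.getVert 0) = 0 := by rw [γ.getVert_zero]; simp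
  have hN : X.dist a (γ.getVert γ.length) = X.dist a b := by rw [γ.getVert_length]
  have hstep : ∀ i, i < γ.length →
      X.dist a (γ.getVert (i + 1)) ≤ X.dist a (γ.getVert i) + 1 := by
    intro i hi
    have hadj := γ.adj_getVert_succ hi
    have h1 : X.dist (γ.getVert i) (γ.getVert (i + 1)) ≤ 1 := dist_le_one_of_adj hadj
    have h2 : X.dist a (γ.getVert (i + 1)) ≤
        X.dist a (γ.getVert i) + X.dist (γ.getVert i) (γ.getVert (i + 1)) := hc.dist_triangle
    omega
  obtain ⟨i, hiN, hgi⟩ := nat_ivt (g := fun i => X.dist a (γ.getVert i)) γ.length t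
    (by show X.dist a (γ.getVert 0) ≤ t; omega)
    (by show t ≤ X.dist a (γ.getVert γ.length); omega) hstep
  have hgi : X.dist a (γ.getVert i) = t := hgi
  have husup : γ.getVert i ∈ γ.support :=
    Walk.mem_support_iff_exists_getVert.mpr ⟨i, rfl, hiN⟩
  have huA : γ.getVert i ∈ (A a b).verts := hγ _ husup
  obtain ⟨w, hw, hdw⟩ :=
    main_est hD hc hA hloc hslim p.length a b hab p hp (le_refl _) (γ.getVert i) huA
  obtain ⟨j, hgvj, hjle⟩ := Walk.mem_support_iff_exists_getVert.mp hw
  have hdaw : X.dist a w = j := by rw [← hgvj]; exact (dist_getVert hc p hp hjle).1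
  have hcm : X.dist w (γ.getVert i) = X.dist (γ.getVert i) w := SimpleGraph.dist_comm
  have h1 : X.dist a (γ.getVert i) ≤ X.dist a w + X.dist w (γ.getVert i) := hc.dist_triangle
  have h2 : X.dist a w ≤ X.dist a (γ.getVert i) + X.dist (γ.getVert i) w := hc.dist_triangle
  have hxw : X.dist x w ≤ D * (6 * D + 13) := by
    rcases le_total t j with h | h
    · have hper := dist_getVert_pair hc p hp h hjle
      rw [hgvt, hgvj] at hper
      omega
    · have hper := dist_getVert_pair hc p hp h htle
      rw [hgvt, hgvj] at hper
      have hcm2 : X.dist x w = X.dist w x := SimpleGraph.dist_comm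
      omega
  have h3 : X.dist x (γ.getVert i) ≤ X.dist x w + X.dist w (γ.getVert i) := hc.dist_triangle
  exact ⟨γ.getVert i, huA, by omega⟩

end Cross

end HypAux

/-- The hyperbolicity criterion of Masur–Schleimer and Bowditch: if a connected
simple graph `X` admits, for every ordered pair of distinct vertices `a b`, a
connected subgraph `A a b` containing `a` and `b` such that, for some `D > 0`,
(i) `A a b` has diameter at most `D` whenever `a` and `b` are adjacent, and
(ii) for every triple `a b c`, each vertex of `A a c` is within distance `D` of
`A a b ∪ A b c`, then `X` is Gromov hyperbolic with a constant `δ` depending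
only on `D`: in every geodesic triangle, each side lies in the
`δ`-neighborhood of the union of the other two. -/
theorem hyperbolicity_criterion :
    ∀ D : ℕ, 0 < D →
      ∃ δ : ℕ, 0 < δ ∧
        ∀ (V : Type) (X : SimpleGraph V), X.Connected →
          ∀ A : V → V → X.Subgraph,
            (∀ a b : V, a ≠ b →
              (A a b).Connected ∧ a ∈ (A a b).verts ∧ b ∈ (A a b).verts) →
            (∀ a b : V, X.Adj a b →
              ∀ x ∈ (A a b).verts, ∀ y ∈ (A a b).verts, X.dist x y ≤ D) →
            (∀ a b c : V, ∀ v ∈ (A a c).verts,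
              ∃ w : V, (w ∈ (A a b).verts ∨ w ∈ (A b c).verts) ∧ X.dist v w ≤ D) →
            ∀ x y z : V, ∀ (p : X.Walk x y) (q : X.Walk y z) (r : X.Walk x z),
              p.length = X.dist x y → q.length = X.dist y z → r.length = X.dist x z →
              ∀ v ∈ p.support,
                ∃ w : V, (w ∈ q.support ∨ w ∈ r.support) ∧ X.dist v w ≤ δ := by
  intro D hD
  refine ⟨3 * (D * (6 * D + 13)) + D, by omega, ?_⟩
  intro V X hc A hA hloc hslim x y z p q r hp hq hr v hv
  by_cases hxy : x = y
  · subst hxy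
    have hlen : p.length = 0 := by rw [hp]; simp
    obtain ⟨t, hgvt, htle⟩ := SimpleGraph.Walk.mem_support_iff_exists_getVert.mp hv
    have ht0 : t = 0 := by omega
    subst ht0
    rw [p.getVert_zero] at hgvt
    refine ⟨x, Or.inr r.start_mem_support, ?_⟩
    subst hgvt
    have h0 : X.dist (p.getVert 0) (p.getVert 0) = 0 := by simp
    omega
  · obtain ⟨u, hu, hvu⟩ := HypAux.geo_near hD hc hA hloc hslim hxy p hp v hv
    by_cases hxz : x = z
    · subst hxz
      have hqr : q.reverse.length = X.dist x y := by
        rw [SimpleGraph.Walk.length_reverse, hq, SimpleGraph.dist_comm]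
      obtain ⟨w, hw, hduw⟩ := HypAux.main_est hD hc hA hloc hslim q.reverse.length x y hxy
        q.reverse hqr (le_refl _) u hu
      refine ⟨w, Or.inl ?_, ?_⟩
      · rw [SimpleGraph.Walk.support_reverse] at hw
        exact List.mem_reverse.mp hw
      · have htri : X.dist v w ≤ X.dist v u + X.dist u w := hc.dist_triangle
        omega
    · by_cases hzy : z = y
      · subst hzy
        obtain ⟨w, hw, hduw⟩ := HypAux.main_est hD hc hA hloc hslim r.length x z hxz
          r hr (le_refl _) u hu
        refine ⟨w, Or.inr hw, ?_⟩
        have htri : X.dist v w ≤ X.dist v u + X.dist u w := hc.dist_triangle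
        omega
      · obtain ⟨w', hw', hduw'⟩ := hslim x z y u hu
        cases hw' with
        | inl h =>
          obtain ⟨w, hw, hd⟩ := HypAux.main_est hD hc hA hloc hslim r.length x z hxz
            r hr (le_refl _) w' h
          refine ⟨w, Or.inr hw, ?_⟩
          have htri1 : X.dist v w ≤ X.dist v u + X.dist u w := hc.dist_triangle
          have htri2 : X.dist u w ≤ X.dist u w' + X.dist w' w := hc.dist_triangle
          omega
        | inr h =>
          have hqr : q.reverse.length = X.dist z y := by
            rw [SimpleGraph.Walk.length_reverse, hq, SimpleGraph.dist_comm]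
          obtain ⟨w, hw, hd⟩ := HypAux.main_est hD hc hA hloc hslim q.reverse.length z y hzy
            q.reverse hqr (le_refl _) w' h
          refine ⟨w, Or.inl ?_, ?_⟩
          · rw [SimpleGraph.Walk.support_reverse] at hw
            exact List.mem_reverse.mp hw
          · have htri1 : X.dist v w ≤ X.dist v u + X.dist u w := hc.dist_triangle
            have htri2 : X.dist u w ≤ X.dist u w' + X.dist w' w := hc.dist_triangle
            omega
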